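/- Suppose f : ℝ² → 𝔽² preserves every distance d > 0 with d² rational. Then f preserves collinearity: if A, B, C ∈ ℝ² are collinear, then f(A), f(B), f(C) ∈ 𝔽² are collinear (affinely dependent over 𝔽). -/

import Mathlib

private lemma perpF {F : Type*} [Field F] (w1 w2 z1 z2 : F)
    (hw : ¬ (w1 = 0 ∧ w2 = 0)) (h : w1 * z1 + w2 * z2 = 0) :
    ∃ k : F, z1 = -k * w2 ∧ z2 = k * w1 := by
  by_cases hw1 : w1 = 0
  · have hw2 : w2 ≠ 0 := by tauto
    have hz2 : z2 = 0 := by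
      rw [hw1] at h
      simpa [hw2] using h
    exact ⟨-z1 / w2, by field_simp, by simp [hz2, hw1]⟩
  · refine ⟨z2 / w1, ?_, by field_simp⟩
    field_simp
    linear_combination h

private lemma line_rel {F : Type*} [Field F] [Algebra ℝ F]
    (P1 P2 PO PQ PX PD : F × F) (L2 s2 t2 : ℚ)
    (hL2pos : 0 < L2) (hdiff : (L2 : ℚ) - s2 = 1)
    (h12 : P1 ≠ P2) (hXD : PX ≠ PD)
    (k1 : (P1.1 - PO.1)^2 + (P1.2 - PO.2)^2 = algebraMap ℝ F ((L2:ℚ):ℝ))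
    (k2 : (P2.1 - PO.1)^2 + (P2.2 - PO.2)^2 = algebraMap ℝ F ((L2:ℚ):ℝ))
    (k3 : (P1.1 - PX.1)^2 + (P1.2 - PX.2)^2 = algebraMap ℝ F ((s2:ℚ):ℝ))
    (k4 : (P2.1 - PX.1)^2 + (P2.2 - PX.2)^2 = algebraMap ℝ F ((s2:ℚ):ℝ))
    (k5 : (P1.1 - PD.1)^2 + (P1.2 - PD.2)^2 = algebraMap ℝ F ((s2:ℚ):ℝ))
    (k6 : (P2.1 - PD.1)^2 + (P2.2 - PD.2)^2 = algebraMap ℝ F ((s2:ℚ):ℝ))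
    (k7 : (PD.1 - PQ.1)^2 + (PD.2 - PQ.2)^2 = algebraMap ℝ F ((t2:ℚ):ℝ))
    (k8 : (PO.1 - PQ.1)^2 + (PO.2 - PQ.2)^2 = algebraMap ℝ F ((t2:ℚ):ℝ)) :
    2*((PX.1 - PO.1)*(PQ.1 - PO.1) + (PX.2 - PO.2)*(PQ.2 - PO.2)) = 1 := by
  have hw : ¬ ((P1.1 - P2.1) = 0 ∧ (P1.2 - P2.2) = 0) := by
    rintro ⟨u, v⟩
    exact h12 (Prod.ext_iff.mpr ⟨sub_eq_zero.mp u, sub_eq_zero.mp v⟩)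
  have hchar : CharZero F := charZero_of_injective_algebraMap (algebraMap ℝ F).injective
  have h2ne : (2:F) ≠ 0 := two_ne_zero
  have h4ne : (4:F) ≠ 0 := by norm_num
  have ha : (P1.1 - P2.1) * (PX.1 - PO.1) + (P1.2 - P2.2) * (PX.2 - PO.2) = 0 := by
    have h' : 2*((P1.1 - P2.1) * (PX.1 - PO.1) + (P1.2 - P2.2) * (PX.2 - PO.2)) = 0 := by
      linear_combination k1 - k3 - k2 + k4
    exact (mul_eq_zero.mp h').resolve_left h2ne
  have hb : (P1.1 - P2.1) * (PD.1 - PO.1) + (P1.2 - P2.2) * (PD.2 - PO.2) = 0 := by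
    have h' : 2*((P1.1 - P2.1) * (PD.1 - PO.1) + (P1.2 - P2.2) * (PD.2 - PO.2)) = 0 := by
      linear_combination k1 - k5 - k2 + k6
    exact (mul_eq_zero.mp h').resolve_left h2ne
  have hc : (P1.1 - P2.1) * (P1.1 + P2.1 - 2*PO.1) + (P1.2 - P2.2) * (P1.2 + P2.2 - 2*PO.2) = 0 := by
    linear_combination k1 - k2
  obtain ⟨kx, hx1, hx2⟩ := perpF _ _ _ _ hw ha
  obtain ⟨kd, hd1, hd2⟩ := perpF _ _ _ _ hw hb
  obtain ⟨km, hm1, hm2⟩ := perpF _ _ _ _ hw hc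
  have e2x : 2*(P1.1 - PO.1) = (P1.1 - P2.1) - km*(P1.2 - P2.2) := by linear_combination hm1
  have e2y : 2*(P1.2 - PO.2) = (P1.2 - P2.2) + km*(P1.1 - P2.1) := by linear_combination hm2
  have e3x : 2*(P1.1 - PX.1) = (P1.1 - P2.1) - (km - 2*kx)*(P1.2 - P2.2) := by
    linear_combination e2x - 2*hx1
  have e3y : 2*(P1.2 - PX.2) = (P1.2 - P2.2) + (km - 2*kx)*(P1.1 - P2.1) := by
    linear_combination e2y - 2*hx2
  have e4x : 2*(P1.1 - PD.1) = (P1.1 - P2.1) - (km - 2*kd)*(P1.2 - P2.2) := by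
    linear_combination e2x - 2*hd1
  have e4y : 2*(P1.2 - PD.2) = (P1.2 - P2.2) + (km - 2*kd)*(P1.1 - P2.1) := by
    linear_combination e2y - 2*hd2
  have hII : 4*(algebraMap ℝ F ((L2:ℚ):ℝ)) = ((P1.1 - P2.1)^2 + (P1.2 - P2.2)^2)*(km^2+1) := by
    linear_combination (-4)*k1 + (2*(P1.1 - PO.1) + (P1.1 - P2.1) - km*(P1.2 - P2.2))*e2x
      + (2*(P1.2 - PO.2) + (P1.2 - P2.2) + km*(P1.1 - P2.1))*e2y
  have hI : 4*(algebraMap ℝ F ((s2:ℚ):ℝ)) = ((P1.1 - P2.1)^2 + (P1.2 - P2.2)^2)*((km - 2*kx)^2+1) := by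
    linear_combination (-4)*k3 + (2*(P1.1 - PX.1) + (P1.1 - P2.1) - (km - 2*kx)*(P1.2 - P2.2))*e3x
      + (2*(P1.2 - PX.2) + (P1.2 - P2.2) + (km - 2*kx)*(P1.1 - P2.1))*e3y
  have hIII : 4*(algebraMap ℝ F ((s2:ℚ):ℝ)) = ((P1.1 - P2.1)^2 + (P1.2 - P2.2)^2)*((km - 2*kd)^2+1) := by
    linear_combination (-4)*k5 + (2*(P1.1 - PD.1) + (P1.1 - P2.1) - (km - 2*kd)*(P1.2 - P2.2))*e4x
      + (2*(P1.2 - PD.2) + (P1.2 - P2.2) + (km - 2*kd)*(P1.1 - P2.1))*e4y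
  have hNW : (P1.1 - P2.1)^2 + (P1.2 - P2.2)^2 ≠ 0 := by
    intro h0
    rw [h0, zero_mul] at hII
    have h1 : algebraMap ℝ F (4*((L2:ℚ):ℝ)) = 0 := by
      rw [map_mul, map_ofNat]
      exact hII
    have h2 : (4:ℝ)*((L2:ℚ):ℝ) = 0 := by
      apply (algebraMap ℝ F).injective
      rw [h1, map_zero]
    have h3 : (0:ℝ) < (L2:ℚ) := by exact_mod_cast hL2pos
    nlinarith
  have hkxkd : kx ≠ kd := by
    intro hEq
    apply hXD
    have l1 : PX.1 = PD.1 := by linear_combination hx1 - hd1 - (P1.2 - P2.2)*hEq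
    have l2 : PX.2 = PD.2 := by linear_combination hx2 - hd2 + (P1.1 - P2.1)*hEq
    exact Prod.ext_iff.mpr ⟨l1, l2⟩
  have hIV : km = kx + kd := by
    have hprod : ((P1.1 - P2.1)^2 + (P1.2 - P2.2)^2) * ((kd - kx) * (km - kx - kd)) = 0 := by
      have h' : 4*(((P1.1 - P2.1)^2 + (P1.2 - P2.2)^2) * ((kd - kx) * (km - kx - kd))) = 0 := by
        linear_combination hIII - hI
      exact (mul_eq_zero.mp h').resolve_left h4ne
    rcases mul_eq_zero.mp hprod with h0 | h0
    · exact absurd h0 hNW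
    rcases mul_eq_zero.mp h0 with h1 | h1
    · exact absurd (by linear_combination -h1 : kx = kd) hkxkd
    · linear_combination h1
  have hLS : algebraMap ℝ F ((L2:ℚ):ℝ) - algebraMap ℝ F ((s2:ℚ):ℝ) = 1 := by
    rw [← map_sub]
    have : ((L2:ℚ):ℝ) - ((s2:ℚ):ℝ) = 1 := by exact_mod_cast hdiff
    rw [this, map_one]
  have hV : ((P1.1 - P2.1)^2 + (P1.2 - P2.2)^2)*(kx*kd) = 1 := by
    have h' : 4*(((P1.1 - P2.1)^2 + (P1.2 - P2.2)^2)*(kx*kd)) = 4*1 := by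
      linear_combination hI - hII + 4*hLS - 4*((P1.1 - P2.1)^2 + (P1.2 - P2.2)^2)*kx*hIV
    exact mul_left_cancel₀ h4ne h'
  have hVI0 : kd*(kd*((P1.1 - P2.1)^2 + (P1.2 - P2.2)^2)
      - 2*(-(P1.2 - P2.2)*(PQ.1 - PO.1) + (P1.1 - P2.1)*(PQ.2 - PO.2))) = 0 := by
    linear_combination (k7 - k8)
      - (PD.1 - PO.1 + (-(kd)*(P1.2 - P2.2)) + 2*(PO.1 - PQ.1))*hd1
      - (PD.2 - PO.2 + kd*(P1.1 - P2.1) + 2*(PO.2 - PQ.2))*hd2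
  have hkd : kd ≠ 0 := by
    intro h0
    rw [h0] at hV
    simp at hV
  have hVI : kd*((P1.1 - P2.1)^2 + (P1.2 - P2.2)^2)
      = 2*(-(P1.2 - P2.2)*(PQ.1 - PO.1) + (P1.1 - P2.1)*(PQ.2 - PO.2)) := by
    rcases mul_eq_zero.mp hVI0 with h0 | h0
    · exact absurd h0 hkd
    · linear_combination h0
  linear_combination 2*(PQ.1 - PO.1)*hx1 + 2*(PQ.2 - PO.2)*hx2 - kx*hVI + hV



set_option maxHeartbeats 2000000 in
/-- `f : ℝ² → 𝔽²` preserves every distance `d > 0` with `d²` rational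
(`|x-y| = d` implies `φ (f x) (f y) = d²`). -/
theorem stmt_13 {F : Type*} [Field F] [Algebra ℝ F]
    (f : ℝ × ℝ → F × F)
    (hf : ∀ d : ℝ, 0 < d → (∃ q : ℚ, (q : ℝ) = d ^ 2) →
      ∀ x y : ℝ × ℝ, Real.sqrt ((x.1 - y.1) ^ 2 + (x.2 - y.2) ^ 2) = d →
        ((f x).1 - (f y).1) ^ 2 + ((f x).2 - (f y).2) ^ 2 = algebraMap ℝ F (d ^ 2))
    (A B C : ℝ × ℝ) (h : Collinear ℝ ({A, B, C} : Set (ℝ × ℝ))) :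
    Collinear F ({f A, f B, f C} : Set (F × F)) := by
  have key : ∀ (x y : ℝ × ℝ) (q : ℚ), 0 < q →
      (x.1 - y.1)^2 + (x.2 - y.2)^2 = (q:ℝ) →
      ((f x).1 - (f y).1)^2 + ((f x).2 - (f y).2)^2 = algebraMap ℝ F ((q:ℚ):ℝ) := by
    intro x y q hq hd
    have hpos : (0:ℝ) < (x.1 - y.1)^2 + (x.2 - y.2)^2 := by
      rw [hd]; exact_mod_cast hq
    have hsq : Real.sqrt ((x.1 - y.1)^2 + (x.2 - y.2)^2) ^ 2
        = (x.1 - y.1)^2 + (x.2 - y.2)^2 := Real.sq_sqrt hpos.le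
    have h1 := hf (Real.sqrt ((x.1 - y.1)^2 + (x.2 - y.2)^2)) (Real.sqrt_pos.mpr hpos)
      ⟨q, by rw [hsq, hd]⟩ x y rfl
    rw [hsq, hd] at h1
    exact h1
  have inj : ∀ U V : ℝ × ℝ, U ≠ V → f U ≠ f V := by
    intro U V hUV hFeq
    have hne : ¬(U.1 = V.1 ∧ U.2 = V.2) := fun hh => hUV (Prod.ext_iff.mpr hh)
    have hDpos : 0 < (U.1 - V.1)^2 + (U.2 - V.2)^2 := by
      rcases not_and_or.mp hne with h1 | h1
      · have h2 : (U.1 - V.1) ≠ 0 := sub_ne_zero.mpr h1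
        have h3 : 0 < (U.1 - V.1)^2 := lt_of_le_of_ne (sq_nonneg _) (Ne.symm (pow_ne_zero 2 h2))
        nlinarith [sq_nonneg (U.2 - V.2)]
      · have h2 : (U.2 - V.2) ≠ 0 := sub_ne_zero.mpr h1
        have h3 : 0 < (U.2 - V.2)^2 := lt_of_le_of_ne (sq_nonneg _) (Ne.symm (pow_ne_zero 2 h2))
        nlinarith [sq_nonneg (U.1 - V.1)]
    set DD := (U.1 - V.1)^2 + (U.2 - V.2)^2 with hDDdef
    obtain ⟨q1, hq1a, hq1b⟩ := exists_rat_btwn (show DD/4 < DD by linarith)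
    obtain ⟨q2, hq2a, hq2b⟩ := exists_rat_btwn hq1b
    have hq1pos : 0 < q1 := by
      have : (0:ℝ) < (q1:ℝ) := lt_trans (by linarith) hq1a
      exact_mod_cast this
    have hq2pos : 0 < q2 := by
      have : (0:ℝ) < (q2:ℝ) := lt_trans (by positivity) (lt_trans hq1a hq2a)
      exact_mod_cast this
    set dd := Real.sqrt DD with hdddef
    have hddpos : 0 < dd := Real.sqrt_pos.mpr hDpos
    have hdd2 : dd^2 = DD := Real.sq_sqrt hDpos.le
    have hddne : dd ≠ 0 := ne_of_gt hddpos
    set al := ((DD:ℝ) + q1 - q2)/(2*dd) with haldef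
    have hkey : ((DD:ℝ) + (q1:ℝ) - (q2:ℝ))^2 < 4*DD*(q1:ℝ) := by
      nlinarith [mul_pos (show (0:ℝ) < (q1:ℝ) - DD/4 by linarith) (show (0:ℝ) < (q2:ℝ) - DD/4 by linarith),
        mul_pos (show (0:ℝ) < (q1:ℝ) - DD/4 by linarith) (show (0:ℝ) < 2*DD - ((q1:ℝ) - DD/4) by linarith),
        mul_pos (show (0:ℝ) < (q2:ℝ) - DD/4 by linarith) (show (0:ℝ) < 2*DD - ((q2:ℝ) - DD/4) by linarith)]
    have hal2 : al^2 = ((DD:ℝ) + q1 - q2)^2/(4*DD) := by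
      rw [haldef, div_pow]
      congr 1
      rw [mul_pow, hdd2]; ring
    have hbsq : 0 < (q1:ℝ) - al^2 := by
      rw [hal2, sub_pos, div_lt_iff₀ (by positivity : (0:ℝ) < 4*DD)]
      nlinarith [hkey]
    set be := Real.sqrt ((q1:ℝ) - al^2) with hbedef
    have hbe2 : be^2 = (q1:ℝ) - al^2 := Real.sq_sqrt hbsq.le
    set u1 := (V.1 - U.1)/dd with hu1def
    set u2 := (V.2 - U.2)/dd with hu2def
    have hu : u1^2 + u2^2 = 1 := by
      rw [hu1def, hu2def, div_pow, div_pow, ← add_div, div_eq_one_iff_eq (by positivity)]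
      rw [hdd2, hDDdef]; ring
    have hV1 : V.1 - U.1 = dd*u1 := by rw [hu1def]; field_simp
    have hV2 : V.2 - U.2 = dd*u2 := by rw [hu2def]; field_simp
    have hald : 2*al*dd = (DD:ℝ) + q1 - q2 := by
      rw [haldef]; field_simp
    have rZU : ((U.1 + al*u1 - be*u2) - U.1)^2 + ((U.2 + al*u2 + be*u1) - U.2)^2 = ((q1:ℚ):ℝ) := by
      linear_combination (al^2 + be^2)*hu + hbe2
    have rZV : ((U.1 + al*u1 - be*u2) - V.1)^2 + ((U.2 + al*u2 + be*u1) - V.2)^2 = ((q2:ℚ):ℝ) := by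
      have c1 : (U.1 + al*u1 - be*u2) - V.1 = (al - dd)*u1 - be*u2 := by
        linear_combination -hV1
      have c2 : (U.2 + al*u2 + be*u1) - V.2 = (al - dd)*u2 + be*u1 := by
        linear_combination -hV2
      rw [c1, c2]
      linear_combination ((al-dd)^2 + be^2)*hu + hbe2 + hdd2 - hald
    have e1 := key (U.1 + al*u1 - be*u2, U.2 + al*u2 + be*u1) U q1 hq1pos rZU
    have e2 := key (U.1 + al*u1 - be*u2, U.2 + al*u2 + be*u1) V q2 hq2pos rZV
    rw [hFeq] at e1
    have : ((q1:ℚ):ℝ) = ((q2:ℚ):ℝ) := (algebraMap ℝ F).injective (e1.symm.trans e2)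
    have : q1 = q2 := by exact_mod_cast this
    have hlt : q1 < q2 := by exact_mod_cast hq2a
    exact absurd this (ne_of_lt hlt)
  classical
  obtain ⟨v, hv⟩ := (collinear_iff_of_mem
    (show A ∈ ({A, B, C} : Set (ℝ × ℝ)) from Set.mem_insert _ _)).mp h
  obtain ⟨tb, htb⟩ := hv B (by simp)
  obtain ⟨tc, htc⟩ := hv C (by simp)
  by_cases hv0 : v = 0
  · rw [hv0, smul_zero, zero_vadd] at htb htc
    have hset : ({f A, f B, f C} : Set (F × F)) = {f A} := by
      rw [htb, htc]; simp
    rw [hset]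
    exact collinear_singleton F _
  have hvpos : 0 < v.1^2 + v.2^2 := by
    have hne : ¬(v.1 = 0 ∧ v.2 = 0) := by
      intro hh; exact hv0 (Prod.ext_iff.mpr ⟨hh.1, hh.2⟩)
    rcases not_and_or.mp hne with h1 | h1
    · nlinarith [lt_of_le_of_ne (sq_nonneg v.1) (Ne.symm (pow_ne_zero 2 h1)), sq_nonneg v.2]
    · nlinarith [lt_of_le_of_ne (sq_nonneg v.2) (Ne.symm (pow_ne_zero 2 h1)), sq_nonneg v.1]
  obtain ⟨mm, hmmdef⟩ : ∃ t : ℝ, t = Real.sqrt (v.1^2 + v.2^2) := ⟨_, rfl⟩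
  have hmmpos : 0 < mm := hmmdef ▸ Real.sqrt_pos.mpr hvpos
  have hmm2 : mm^2 = v.1^2 + v.2^2 := hmmdef ▸ Real.sq_sqrt hvpos.le
  have hmmne : mm ≠ 0 := ne_of_gt hmmpos
  obtain ⟨ee1, hee1def⟩ : ∃ t : ℝ, t = v.1/mm := ⟨_, rfl⟩
  obtain ⟨ee2, hee2def⟩ : ∃ t : ℝ, t = v.2/mm := ⟨_, rfl⟩
  have he : ee1^2 + ee2^2 = 1 := by
    rw [hee1def, hee2def, div_pow, div_pow, ← add_div,
      div_eq_one_iff_eq (by positivity), hmm2]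
  obtain ⟨bb, hbbdef⟩ : ∃ t : ℝ, t = tb*mm := ⟨_, rfl⟩
  obtain ⟨cc, hccdef⟩ : ∃ t : ℝ, t = tc*mm := ⟨_, rfl⟩
  have hB : B = (A.1 + bb*ee1, A.2 + bb*ee2) := by
    rw [htb]
    refine Prod.ext_iff.mpr ⟨?_, ?_⟩
    · show tb*v.1 + A.1 = _
      rw [hbbdef, hee1def]; field_simp; ring
    · show tb*v.2 + A.2 = _
      rw [hbbdef, hee2def]; field_simp; ring
  have hC : C = (A.1 + cc*ee1, A.2 + cc*ee2) := by
    rw [htc]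
    refine Prod.ext_iff.mpr ⟨?_, ?_⟩
    · show tc*v.1 + A.1 = _
      rw [hccdef, hee1def]; field_simp; ring
    · show tc*v.2 + A.2 = _
      rw [hccdef, hee2def]; field_simp; ring
  obtain ⟨x0, hx0def⟩ : ∃ t : ℝ, t = 1 + max 0 (max bb cc) := ⟨_, rfl⟩
  obtain ⟨mn, hmndef⟩ : ∃ t : ℝ, t = min 0 (min bb cc) := ⟨_, rfl⟩
  have hx0one : 1 ≤ x0 := by
    have := le_max_left 0 (max bb cc); rw [hx0def]; linarith
  have hmn0 : mn ≤ 0 := by rw [hmndef]; exact min_le_left _ _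
  obtain ⟨L2, hL2gt⟩ := exists_rat_gt (max ((x0 - mn)^2 + 1) 2)
  have hL2M : (x0 - mn)^2 + 1 < (L2:ℝ) := lt_of_le_of_lt (le_max_left _ _) hL2gt
  have hL2two : (2:ℝ) < (L2:ℝ) := lt_of_le_of_lt (le_max_right _ _) hL2gt
  have hL2pos : 0 < L2 := by
    have : (0:ℝ) < (L2:ℝ) := by linarith
    exact_mod_cast this
  have hs2pos : 0 < L2 - 1 := by
    have h1 : (1:ℝ) < (L2:ℝ) := by linarith
    have h2 : (1:ℚ) < L2 := by exact_mod_cast h1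
    linarith
  have ht2pos : 0 < (1/4 : ℚ) := by norm_num
  obtain ⟨O1, hO1def⟩ : ∃ t : ℝ, t = A.1 + x0*ee1 - ee2 := ⟨_, rfl⟩
  obtain ⟨O2, hO2def⟩ : ∃ t : ℝ, t = A.2 + x0*ee2 + ee1 := ⟨_, rfl⟩
  obtain ⟨Q1, hQ1def⟩ : ∃ t : ℝ, t = A.1 + x0*ee1 - ee2/2 := ⟨_, rfl⟩
  obtain ⟨Q2, hQ2def⟩ : ∃ t : ℝ, t = A.2 + x0*ee2 + ee1/2 := ⟨_, rfl⟩
  have hline : ∀ x : ℝ, 1 ≤ x0 - x → (x - x0)^2 + 1 < (L2:ℝ) →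
      2*(((f (A.1 + x*ee1, A.2 + x*ee2)).1 - (f (O1, O2)).1)
          * ((f (Q1, Q2)).1 - (f (O1, O2)).1)
        + ((f (A.1 + x*ee1, A.2 + x*ee2)).2 - (f (O1, O2)).2)
          * ((f (Q1, Q2)).2 - (f (O1, O2)).2)) = 1 := by
    intro x hxa hxb
    obtain ⟨rs, hrsdef⟩ : ∃ t : ℝ, t = (x - x0)^2 + 1 := ⟨_, rfl⟩
    have hrs2 : 2 ≤ rs := by rw [hrsdef]; nlinarith
    have hrsub : rs < (L2:ℝ) := by rw [hrsdef]; exact hxb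
    have hrspos : (0:ℝ) < rs := by linarith
    have hrsne : rs ≠ 0 := ne_of_gt hrspos
    obtain ⟨V1, hV1def⟩ : ∃ t : ℝ, t = (x - x0)*ee1 + ee2 := ⟨_, rfl⟩
    obtain ⟨V2, hV2def⟩ : ∃ t : ℝ, t = (x - x0)*ee2 - ee1 := ⟨_, rfl⟩
    have hNV : V1^2 + V2^2 = rs := by
      rw [hV1def, hV2def, hrsdef]; linear_combination ((x-x0)^2+1)*he
    have hVn : V1*(-ee2) + V2*ee1 = -1 := by
      rw [hV1def, hV2def]; linear_combination -he
    obtain ⟨ga, hgadef⟩ : ∃ t : ℝ, t = (1 + rs)/(2*rs) := ⟨_, rfl⟩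
    obtain ⟨es, hesdef⟩ : ∃ t : ℝ, t = (4*(L2:ℝ)*rs - (1+rs)^2)/(4*rs^2) := ⟨_, rfl⟩
    have hespos : 0 < es := by
      rw [hesdef]
      apply div_pos
      · nlinarith
      · positivity
    obtain ⟨eta, hetadef⟩ : ∃ t : ℝ, t = Real.sqrt es := ⟨_, rfl⟩
    have heta2 : eta^2 = es := hetadef ▸ Real.sq_sqrt hespos.le
    have hetapos : 0 < eta := hetadef ▸ Real.sqrt_pos.mpr hespos
    have hX1 : A.1 + x*ee1 = O1 + V1 := by rw [hO1def, hV1def]; ring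
    have hX2 : A.2 + x*ee2 = O2 + V2 := by rw [hO2def, hV2def]; ring
    have hga1 : (2*rs)*ga = 1 + rs := by
      rw [hgadef]; field_simp
    have hfe : (ga^2 + eta^2)*rs = ((L2:ℚ):ℝ) := by
      rw [heta2, hgadef, hesdef]; field_simp; ring
    have rEaO : ((O1 + ga*V1 - eta*V2) - O1)^2 + ((O2 + ga*V2 + eta*V1) - O2)^2 = ((L2:ℚ):ℝ) := by
      linear_combination (ga^2 + eta^2)*hNV + hfe
    have rEbO : ((O1 + ga*V1 + eta*V2) - O1)^2 + ((O2 + ga*V2 - eta*V1) - O2)^2 = ((L2:ℚ):ℝ) := by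
      linear_combination (ga^2 + eta^2)*hNV + hfe
    have hs2cast : (((L2 - 1 : ℚ)):ℝ) = ((L2:ℚ):ℝ) - 1 := by push_cast; ring
    have rEaX : ((O1 + ga*V1 - eta*V2) - (A.1 + x*ee1))^2
        + ((O2 + ga*V2 + eta*V1) - (A.2 + x*ee2))^2 = (((L2 - 1 : ℚ)):ℝ) := by
      rw [hX1, hX2, hs2cast]
      linear_combination ((ga-1)^2 + eta^2)*hNV + hfe - hga1
    have rEbX : ((O1 + ga*V1 + eta*V2) - (A.1 + x*ee1))^2
        + ((O2 + ga*V2 - eta*V1) - (A.2 + x*ee2))^2 = (((L2 - 1 : ℚ)):ℝ) := by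
      rw [hX1, hX2, hs2cast]
      linear_combination ((ga-1)^2 + eta^2)*hNV + hfe - hga1
    have hrs1 : rs*(1/rs) = 1 := by field_simp
    have rEaD : ((O1 + ga*V1 - eta*V2) - (O1 + V1/rs))^2
        + ((O2 + ga*V2 + eta*V1) - (O2 + V2/rs))^2 = (((L2 - 1 : ℚ)):ℝ) := by
      rw [hs2cast]
      have c1 : V1/rs = V1*(1/rs) := by ring
      have c2 : V2/rs = V2*(1/rs) := by ring
      rw [c1, c2]
      linear_combination ((ga - 1/rs)^2 + eta^2)*hNV + hfe - (1/rs)*hga1 + (1/rs - 1)*hrs1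
    have rEbD : ((O1 + ga*V1 + eta*V2) - (O1 + V1/rs))^2
        + ((O2 + ga*V2 - eta*V1) - (O2 + V2/rs))^2 = (((L2 - 1 : ℚ)):ℝ) := by
      rw [hs2cast]
      have c1 : V1/rs = V1*(1/rs) := by ring
      have c2 : V2/rs = V2*(1/rs) := by ring
      rw [c1, c2]
      linear_combination ((ga - 1/rs)^2 + eta^2)*hNV + hfe - (1/rs)*hga1 + (1/rs - 1)*hrs1
    have rDQ : ((O1 + V1/rs) - Q1)^2 + ((O2 + V2/rs) - Q2)^2 = (((1/4 : ℚ)):ℝ) := by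
      rw [hO1def, hO2def, hQ1def, hQ2def]
      rw [show (((1/4:ℚ)):ℝ) = 1/4 by norm_num]
      have c1 : V1/rs = V1*(1/rs) := by ring
      have c2 : V2/rs = V2*(1/rs) := by ring
      rw [c1, c2]
      linear_combination (1/rs)^2*hNV + (1/rs)*hVn + he/4 + (1/rs)*hrs1
    have rOQ : (O1 - Q1)^2 + (O2 - Q2)^2 = (((1/4 : ℚ)):ℝ) := by
      rw [hO1def, hO2def, hQ1def, hQ2def]
      rw [show (((1/4:ℚ)):ℝ) = 1/4 by norm_num]
      linear_combination he/4
    have hVne : ¬(V1 = 0 ∧ V2 = 0) := by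
      rintro ⟨h1, h2⟩
      rw [h1, h2] at hNV
      simp at hNV
      linarith [hNV.symm]
    have hEab : ((O1 + ga*V1 - eta*V2, O2 + ga*V2 + eta*V1) : ℝ × ℝ)
        ≠ (O1 + ga*V1 + eta*V2, O2 + ga*V2 - eta*V1) := by
      intro hEq
      obtain ⟨h1, h2⟩ := Prod.ext_iff.mp hEq
      simp only [] at h1 h2
      apply hVne
      constructor
      · have h3 : eta*V1 = 0 := by linarith
        rcases mul_eq_zero.mp h3 with hh | hh
        · exact absurd hh (ne_of_gt hetapos)
        · exact hh
      · have h3 : eta*V2 = 0 := by linarith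
        rcases mul_eq_zero.mp h3 with hh | hh
        · exact absurd hh (ne_of_gt hetapos)
        · exact hh
    have hXD : ((A.1 + x*ee1, A.2 + x*ee2) : ℝ × ℝ) ≠ (O1 + V1/rs, O2 + V2/rs) := by
      intro hEq
      obtain ⟨h1, h2⟩ := Prod.ext_iff.mp hEq
      simp only [] at h1 h2
      rw [hX1] at h1
      rw [hX2] at h2
      apply hVne
      have hfac : rs - 1 ≠ 0 := by
        intro hh
        have : rs = 1 := by linarith [sub_eq_zero.mp hh]
        linarith
      constructor
      · have h3 : V1*(rs - 1) = 0 := by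
          have h1'' : V1 = V1/rs := by linarith
          rw [eq_div_iff hrsne] at h1''
          linear_combination h1''
        rcases mul_eq_zero.mp h3 with hh | hh
        · exact hh
        · exact absurd hh hfac
      · have h3 : V2*(rs - 1) = 0 := by
          have h2'' : V2 = V2/rs := by linarith
          rw [eq_div_iff hrsne] at h2''
          linear_combination h2''
        rcases mul_eq_zero.mp h3 with hh | hh
        · exact hh
        · exact absurd hh hfac
    exact line_rel (f (O1 + ga*V1 - eta*V2, O2 + ga*V2 + eta*V1))
      (f (O1 + ga*V1 + eta*V2, O2 + ga*V2 - eta*V1))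
      (f (O1, O2)) (f (Q1, Q2)) (f (A.1 + x*ee1, A.2 + x*ee2)) (f (O1 + V1/rs, O2 + V2/rs))
      L2 (L2 - 1) (1/4) hL2pos (by ring) (inj _ _ hEab) (inj _ _ hXD)
      (key _ _ L2 hL2pos rEaO) (key _ _ L2 hL2pos rEbO)
      (key _ _ (L2-1) hs2pos rEaX) (key _ _ (L2-1) hs2pos rEbX)
      (key _ _ (L2-1) hs2pos rEaD) (key _ _ (L2-1) hs2pos rEbD)
      (key _ _ (1/4) ht2pos rDQ) (key _ _ (1/4) ht2pos rOQ)
  -- positions of 0, bb, cc relative to the anchors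
  have hmaxb : bb ≤ max 0 (max bb cc) := le_trans (le_max_left bb cc) (le_max_right 0 _)
  have hmaxc : cc ≤ max 0 (max bb cc) := le_trans (le_max_right bb cc) (le_max_right 0 _)
  have hmnb : mn ≤ bb := by rw [hmndef]; exact le_trans (min_le_right _ _) (min_le_left _ _)
  have hmnc : mn ≤ cc := by rw [hmndef]; exact le_trans (min_le_right _ _) (min_le_right _ _)
  have hx0b : bb + 1 ≤ x0 := by rw [hx0def]; linarith
  have hx0c : cc + 1 ≤ x0 := by rw [hx0def]; linarith
  have relA := hline 0 (by linarith) (by nlinarith)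
  have relB := hline bb (by linarith) (by nlinarith)
  have relC := hline cc (by linarith) (by nlinarith)
  have hA0 : ((A.1 + 0*ee1, A.2 + 0*ee2) : ℝ × ℝ) = A := by
    simp
  rw [hA0] at relA
  rw [← hB] at relB
  rw [← hC] at relC
  have hchar : CharZero F := charZero_of_injective_algebraMap (algebraMap ℝ F).injective
  have hOQ : ((O1, O2) : ℝ × ℝ) ≠ (Q1, Q2) := by
    intro hEq
    obtain ⟨h1, h2⟩ := Prod.ext_iff.mp hEq
    simp only [] at h1 h2
    rw [hO1def, hQ1def] at h1
    rw [hO2def, hQ2def] at h2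
    have he2 : ee2 = 0 := by linarith
    have he1 : ee1 = 0 := by linarith
    rw [he1, he2] at he
    norm_num at he
  have hq := inj _ _ hOQ
  have hqne : ¬((f (Q1, Q2)).1 - (f (O1, O2)).1 = 0 ∧ (f (Q1, Q2)).2 - (f (O1, O2)).2 = 0) := by
    rintro ⟨h1, h2⟩
    exact hq (Prod.ext_iff.mpr ⟨(sub_eq_zero.mp h1).symm, (sub_eq_zero.mp h2).symm⟩)
  have hBA : ((f (Q1, Q2)).1 - (f (O1, O2)).1)*((f B).1 - (f A).1)
      + ((f (Q1, Q2)).2 - (f (O1, O2)).2)*((f B).2 - (f A).2) = 0 := by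
    have h' : 2*(((f (Q1, Q2)).1 - (f (O1, O2)).1)*((f B).1 - (f A).1)
        + ((f (Q1, Q2)).2 - (f (O1, O2)).2)*((f B).2 - (f A).2)) = 0 := by
      linear_combination relB - relA
    exact (mul_eq_zero.mp h').resolve_left two_ne_zero
  have hCA : ((f (Q1, Q2)).1 - (f (O1, O2)).1)*((f C).1 - (f A).1)
      + ((f (Q1, Q2)).2 - (f (O1, O2)).2)*((f C).2 - (f A).2) = 0 := by
    have h' : 2*(((f (Q1, Q2)).1 - (f (O1, O2)).1)*((f C).1 - (f A).1)
        + ((f (Q1, Q2)).2 - (f (O1, O2)).2)*((f C).2 - (f A).2)) = 0 := by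
      linear_combination relC - relA
    exact (mul_eq_zero.mp h').resolve_left two_ne_zero
  obtain ⟨k1, hk11, hk12⟩ := perpF _ _ _ _ hqne hBA
  obtain ⟨k2, hk21, hk22⟩ := perpF _ _ _ _ hqne hCA
  rw [collinear_iff_of_mem (Set.mem_insert (f A) _)]
  refine ⟨(-((f (Q1, Q2)).2 - (f (O1, O2)).2), (f (Q1, Q2)).1 - (f (O1, O2)).1), ?_⟩
  intro p hp
  simp only [Set.mem_insert_iff, Set.mem_singleton_iff] at hp
  rcases hp with rfl | rfl | rfl
  · exact ⟨0, by simp⟩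
  · refine ⟨k1, ?_⟩
    have hsm : k1 • ((-((f (Q1, Q2)).2 - (f (O1, O2)).2), (f (Q1, Q2)).1 - (f (O1, O2)).1) : F × F)
        +ᵥ f A
        = (k1 * (-((f (Q1, Q2)).2 - (f (O1, O2)).2)) + (f A).1,
           k1 * ((f (Q1, Q2)).1 - (f (O1, O2)).1) + (f A).2) := by
      rw [Prod.smul_mk, vadd_eq_add, Prod.mk_add_mk]
      simp [smul_eq_mul]
    rw [hsm]
    refine Prod.ext_iff.mpr ⟨?_, ?_⟩
    · linear_combination hk11
    · linear_combination hk12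
  · refine ⟨k2, ?_⟩
    have hsm : k2 • ((-((f (Q1, Q2)).2 - (f (O1, O2)).2), (f (Q1, Q2)).1 - (f (O1, O2)).1) : F × F)
        +ᵥ f A
        = (k2 * (-((f (Q1, Q2)).2 - (f (O1, O2)).2)) + (f A).1,
           k2 * ((f (Q1, Q2)).1 - (f (O1, O2)).1) + (f A).2) := by
      rw [Prod.smul_mk, vadd_eq_add, Prod.mk_add_mk]
      simp [smul_eq_mul]
    rw [hsm]
    refine Prod.ext_iff.mpr ⟨?_, ?_⟩
    · linear_combination hk21
    · linear_combination hk22
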